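/- For the amplitude-damping process (E, ρ) with ρ = diag((1+r₃)/2, (1-r₃)/2), the two-time expectation values of Pauli observables satisfy: ⟨σ₀,σ₃⟩ = r₃ + γ(1-r₃), ⟨σ₃,σ₀⟩ = r₃, ⟨σ₁,σ₁⟩ = ⟨σ₂,σ₂⟩ = √(1-γ), ⟨σ₃,σ₃⟩ = 1 - γ(1-r₃), and ⟨σ_α,σ_β⟩ = 0 for all other pairs with α ≠ β from {0,1,2,3}, where ⟨σ_α,σ_β⟩ := Tr[(E ⋆ ρ)(σ_α ⊗ σ_β)]. -/

import Mathlib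

open Matrix
open scoped Kronecker

noncomputable section

/-- The Jamiolkowski matrix `J[E] = ∑ i j, |i⟩⟨j| ⊗ E(|j⟩⟨i|)`. -/
def Jam {n m : ℕ} (E : Matrix (Fin n) (Fin n) ℂ → Matrix (Fin m) (Fin m) ℂ) :
    Matrix (Fin n × Fin m) (Fin n × Fin m) ℂ :=
  ∑ i : Fin n, ∑ j : Fin n,
    (Matrix.single i j (1 : ℂ)) ⊗ₖ E (Matrix.single j i (1 : ℂ))

/-- The spatiotemporal product `E ⋆ ρ = ½{ρ ⊗ 1, J[E]}`. -/
def sot {n m : ℕ} (E : Matrix (Fin n) (Fin n) ℂ → Matrix (Fin m) (Fin m) ℂ)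
    (ρ : Matrix (Fin n) (Fin n) ℂ) : Matrix (Fin n × Fin m) (Fin n × Fin m) ℂ :=
  (1 / 2 : ℂ) • ((ρ ⊗ₖ (1 : Matrix (Fin m) (Fin m) ℂ)) * Jam E
      + Jam E * (ρ ⊗ₖ (1 : Matrix (Fin m) (Fin m) ℂ)))

/-- The swap map `S(σ ⊗ τ) = τ ⊗ σ` on matrix algebras. -/
def swapM {m n : ℕ} (X : Matrix (Fin m × Fin n) (Fin m × Fin n) ℂ) :
    Matrix (Fin n × Fin m) (Fin n × Fin m) ℂ :=
  X.submatrix (fun p => (p.2, p.1)) (fun p => (p.2, p.1))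

/-- The Choi matrix `C[E] = ∑ i j, |i⟩⟨j| ⊗ E(|i⟩⟨j|)`. -/
def ChoiM {n m : ℕ} (E : Matrix (Fin n) (Fin n) ℂ → Matrix (Fin m) (Fin m) ℂ) :
    Matrix (Fin n × Fin m) (Fin n × Fin m) ℂ :=
  ∑ i : Fin n, ∑ j : Fin n,
    (Matrix.single i j (1 : ℂ)) ⊗ₖ E (Matrix.single i j (1 : ℂ))

/-- Pauli matrix σ₁. -/
def pauli1 : Matrix (Fin 2) (Fin 2) ℂ := !![0, 1; 1, 0]
/-- Pauli matrix σ₂. -/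
def pauli2 : Matrix (Fin 2) (Fin 2) ℂ := !![0, -Complex.I; Complex.I, 0]
/-- Pauli matrix σ₃. -/
def pauli3 : Matrix (Fin 2) (Fin 2) ℂ := !![1, 0; 0, -1]

/-- First Kraus operator of the amplitude-damping channel. -/
def AD0 (γ : ℝ) : Matrix (Fin 2) (Fin 2) ℂ := !![1, 0; 0, (Real.sqrt (1 - γ) : ℂ)]
/-- Second Kraus operator of the amplitude-damping channel. -/
def AD1 (γ : ℝ) : Matrix (Fin 2) (Fin 2) ℂ := !![0, (Real.sqrt γ : ℂ); 0, 0]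
/-- The amplitude-damping channel with damping parameter γ. -/
def AD (γ : ℝ) (X : Matrix (Fin 2) (Fin 2) ℂ) : Matrix (Fin 2) (Fin 2) ℂ :=
  AD0 γ * X * (AD0 γ)ᴴ + AD1 γ * X * (AD1 γ)ᴴ

set_option maxHeartbeats 1000000 in
/-- The table of two-time expectation values `⟨σ_α, σ_β⟩ = Tr[(E ⋆ ρ)(σ_α ⊗ σ_β)]` for
the amplitude-damping process `(E, ρ)` with diagonal input `ρ`. -/
theorem amplitude_damping_two_time_values (γ r3 : ℝ) (hγ0 : 0 ≤ γ) (hγ1 : γ ≤ 1)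
    (hr0 : -1 ≤ r3) (hr1 : r3 ≤ 1) :
    letI ρ : Matrix (Fin 2) (Fin 2) ℂ :=
      !![(((1 + r3) / 2 : ℝ) : ℂ), 0; 0, (((1 - r3) / 2 : ℝ) : ℂ)]
    letI p : Fin 4 → Matrix (Fin 2) (Fin 2) ℂ := ![1, pauli1, pauli2, pauli3]
    letI tt : Fin 4 → Fin 4 → ℂ := fun α β => (sot (AD γ) ρ * (p α ⊗ₖ p β)).trace
    tt 0 3 = ((r3 + γ * (1 - r3) : ℝ) : ℂ) ∧
    tt 3 0 = (r3 : ℂ) ∧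
    tt 1 1 = (Real.sqrt (1 - γ) : ℂ) ∧
    tt 2 2 = (Real.sqrt (1 - γ) : ℂ) ∧
    tt 3 3 = ((1 - γ * (1 - r3) : ℝ) : ℂ) ∧
    ∀ α β : Fin 4, α ≠ β → (α, β) ≠ ((0 : Fin 4), (3 : Fin 4)) →
      (α, β) ≠ ((3 : Fin 4), (0 : Fin 4)) → tt α β = 0 := by
  beta_reduce
  set a : ℝ := (1 + r3) / 2 with ha
  set b : ℝ := (1 - r3) / 2 with hb
  set s : ℝ := Real.sqrt (1 - γ) with hs
  have h1 : (Real.sqrt γ : ℂ) * (Real.sqrt γ : ℂ) = (γ : ℂ) := by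
    rw [← Complex.ofReal_mul, Real.mul_self_sqrt hγ0]
  have h2 : (s : ℂ) * (s : ℂ) = ((1 - γ : ℝ) : ℂ) := by
    rw [← Complex.ofReal_mul, hs, Real.mul_self_sqrt (by linarith)]
  have hc0 : (AD0 γ)ᴴ = AD0 γ := by
    rw [eta_fin_two ((AD0 γ)ᴴ)]
    simp [AD0, Matrix.conjTranspose_apply]
  have hc1 : (AD1 γ)ᴴ = !![0, 0; (Real.sqrt γ : ℂ), 0] := by
    rw [eta_fin_two ((AD1 γ)ᴴ)]
    simp [AD1, Matrix.conjTranspose_apply]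
  have hs00 : Matrix.single (0 : Fin 2) (0 : Fin 2) (1 : ℂ) = !![1,0;0,0] := by
    ext i j; fin_cases i <;> fin_cases j <;> simp [Matrix.single]
  have hs01 : Matrix.single (0 : Fin 2) (1 : Fin 2) (1 : ℂ) = !![0,1;0,0] := by
    ext i j; fin_cases i <;> fin_cases j <;> simp [Matrix.single]
  have hs10 : Matrix.single (1 : Fin 2) (0 : Fin 2) (1 : ℂ) = !![0,0;1,0] := by
    ext i j; fin_cases i <;> fin_cases j <;> simp [Matrix.single]
  have hs11 : Matrix.single (1 : Fin 2) (1 : Fin 2) (1 : ℂ) = !![0,0;0,1] := by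
    ext i j; fin_cases i <;> fin_cases j <;> simp [Matrix.single]
  have hAD00 : AD γ !![1,0;0,0] = !![1,0;0,0] := by
    rw [AD, hc0, hc1]; ext i j; fin_cases i <;> fin_cases j <;> simp [AD0, AD1, Matrix.mul_fin_two]
  have hAD01 : AD γ !![0,1;0,0] = !![0,(s:ℂ);0,0] := by
    rw [AD, hc0, hc1]; ext i j; fin_cases i <;> fin_cases j <;> simp [AD0, AD1, Matrix.mul_fin_two, hs]
  have hAD10 : AD γ !![0,0;1,0] = !![0,0;(s:ℂ),0] := by
    rw [AD, hc0, hc1]; ext i j; fin_cases i <;> fin_cases j <;> simp [AD0, AD1, Matrix.mul_fin_two, hs]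
  have hAD11 : AD γ !![0,0;0,1] = !![(γ:ℂ),0;0,((1-γ:ℝ):ℂ)] := by
    rw [AD, hc0, hc1]; ext i j; fin_cases i <;> fin_cases j <;> simp [AD0, AD1, Matrix.mul_fin_two, h1, h2, hs]
    rw [← Complex.ofReal_mul, Real.mul_self_sqrt (by linarith)]; simp
  have hJam : Jam (AD γ) =
      !![1,0;0,0] ⊗ₖ !![1,0;0,0] + !![0,1;0,0] ⊗ₖ !![0,0;(s:ℂ),0]
        + !![0,0;1,0] ⊗ₖ !![0,(s:ℂ);0,0]
        + !![0,0;0,1] ⊗ₖ !![(γ:ℂ),0;0,((1-γ:ℝ):ℂ)] := by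
    rw [Jam]
    simp only [Fin.sum_univ_two, hs00, hs01, hs10, hs11, hAD00, hAD01, hAD10, hAD11]
    abel
  have key : ∀ A B : Matrix (Fin 2) (Fin 2) ℂ,
      (sot (AD γ) !![(a:ℂ), 0; 0, (b:ℂ)] * (A ⊗ₖ B)).trace =
        (a:ℂ) * A 0 0 * B 0 0
          + (1/2 : ℂ) * ((a:ℂ) + (b:ℂ)) * (s:ℂ) * (A 0 1 * B 1 0 + A 1 0 * B 0 1)
          + (b:ℂ) * (γ:ℂ) * A 1 1 * B 0 0
          + (b:ℂ) * ((1-γ:ℝ):ℂ) * A 1 1 * B 1 1 := by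
    intro A B
    rw [sot, hJam]
    rw [eta_fin_two A, eta_fin_two B, Matrix.one_fin_two]
    simp only [Matrix.mul_add, Matrix.add_mul, Matrix.smul_mul, ← Matrix.mul_kronecker_mul,
      Matrix.trace_add, Matrix.trace_smul, Matrix.trace_kronecker, Matrix.mul_fin_two,
      Matrix.trace_fin_two_of, Matrix.cons_val', Matrix.cons_val_zero, Matrix.cons_val_one,
      Matrix.head_cons, Matrix.head_fin_const, Matrix.empty_val', Matrix.cons_val_fin_one,
      Matrix.of_apply, smul_eq_mul]
    ring
  have hab : (a:ℂ) + (b:ℂ) = 1 := by rw [ha, hb]; push_cast; ring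
  have hab : (a:ℂ) + (b:ℂ) = 1 := by rw [ha, hb]; push_cast; ring
  refine ⟨?_, ?_, ?_, ?_, ?_, ?_⟩ <;> try beta_reduce
  · rw [key]
    simp [pauli3, Matrix.one_apply, ha, hb]
    push_cast; ring
  · rw [key]
    simp [pauli3, Matrix.one_apply, ha, hb]
    push_cast; ring
  · rw [key]
    simp [pauli1, hab]
    ring
  · rw [key]
    simp [pauli2]
    ring_nf
    linear_combination (s:ℂ) * hab
  · rw [key]
    simp [pauli3, ha, hb]
    push_cast; ring
  · intro α β hne hne1 hne2
    clear hc0 hc1 hs00 hs01 hs10 hs11 hAD00 hAD01 hAD10 hAD11 hJam h1 h2 hab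
    fin_cases α <;> fin_cases β <;>
      first
        | (exact absurd rfl hne)
        | (exact absurd rfl hne1)
        | (exact absurd rfl hne2)
        | (rw [key]
           simp [pauli1, pauli2, pauli3, Matrix.one_apply]
           try ring)
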